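/- Let g : ℝ³ → ℝ be defined by g(a,b,c) = max{ (8/9)(a² − 2√2·ac + 2c²), (1/9)(√2·a + √6·b + 4c)², (1/9)(√2·a − √6·b + 4c)², (2/3)(3a² + 2√3·ab + b²), (2/3)(3a² − 2√3·ab + b²), (8/3)b² }. Then (3/8)·(1/(4π))·∫₀^{2π} ∫₀^{π} g(cos θ sin φ, sin θ sin φ, cos φ) · sin φ dφ dθ = (1/3)·(1 + (3 + √3)/π). (This is the mean square width of a regular tetrahedron with unit edge length.) -/

import Mathlib

set_option maxHeartbeats 1000000


open Real

/-- Squared-width function of the regular tetrahedron with vertices `(0,0,1)`,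
`(2√2/3, 0, −1/3)`, `(−√2/3, √(2/3), −1/3)`, `(−√2/3, −√(2/3), −1/3)` in direction
`(a,b,c)` on the unit sphere. -/
noncomputable def gTetra (a b c : ℝ) : ℝ :=
  max (max (max ((8/9) * (a ^ 2 - 2 * Real.sqrt 2 * a * c + 2 * c ^ 2))
        ((1/9) * (Real.sqrt 2 * a + Real.sqrt 6 * b + 4 * c) ^ 2))
      (max ((1/9) * (Real.sqrt 2 * a - Real.sqrt 6 * b + 4 * c) ^ 2)
        ((2/3) * (3 * a ^ 2 + 2 * Real.sqrt 3 * a * b + b ^ 2))))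
    (max ((2/3) * (3 * a ^ 2 - 2 * Real.sqrt 3 * a * b + b ^ 2)) ((8/3) * b ^ 2))

section helpers

lemma hu : Real.sqrt 2 ^ 2 = 2 := Real.sq_sqrt (by norm_num)
lemma hv : Real.sqrt 3 ^ 2 = 3 := Real.sq_sqrt (by norm_num)
lemma h6 : Real.sqrt 6 = Real.sqrt 2 * Real.sqrt 3 := by
  rw [show (6:ℝ) = 2*3 by norm_num, Real.sqrt_mul (by norm_num)]
lemma hu0 : (0:ℝ) ≤ Real.sqrt 2 := Real.sqrt_nonneg 2
lemma hv0 : (0:ℝ) ≤ Real.sqrt 3 := Real.sqrt_nonneg 3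
lemma hup : (0:ℝ) < Real.sqrt 2 := Real.sqrt_pos.mpr (by norm_num)

end helpers

lemma gTetra_eq_q1 (a b c : ℝ) (ha : 0 ≤ a) (hb : 0 ≤ b) (hba : b ≤ Real.sqrt 3 * a)
    (hac : a ≤ Real.sqrt 2 * c) :
    gTetra a b c = (1/9) * (Real.sqrt 2 * a + Real.sqrt 6 * b + 4 * c) ^ 2 := by
  have hc0 : 0 ≤ c := le_of_mul_le_mul_left (by simpa using le_trans ha hac) hup
  have huc0 : 0 ≤ Real.sqrt 2 * c := mul_nonneg hu0 hc0
  have hvb0 : 0 ≤ Real.sqrt 3 * b := mul_nonneg hv0 hb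
  have h3a : Real.sqrt 3 * (Real.sqrt 3 * a) = 3 * a := by linear_combination a * hv
  have hvb3a : Real.sqrt 3 * b ≤ 3 * a := by
    have := mul_le_mul_of_nonneg_left hba hv0; linarith
  have i0 : (8/9) * (a ^ 2 - 2 * Real.sqrt 2 * a * c + 2 * c ^ 2)
      ≤ (1/9) * (Real.sqrt 2 * a + Real.sqrt 6 * b + 4 * c) ^ 2 := by
    have key : (1/9) * (Real.sqrt 2 * a + Real.sqrt 6 * b + 4 * c) ^ 2
        - (8/9) * (a ^ 2 - 2 * Real.sqrt 2 * a * c + 2 * c ^ 2)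
        = (2/9) * ((3*a + Real.sqrt 3*b) * (-a + Real.sqrt 3*b + 4*(Real.sqrt 2*c))) := by
      linear_combination ((8/9)*b*c + (1/9)*b^2*Real.sqrt 6 + (1/9)*b^2*Real.sqrt 2*Real.sqrt 3 + (2/9)*a*b*Real.sqrt 2) * h6 + ((1/9)*b^2*Real.sqrt 3^2 + (2/9)*a*b*Real.sqrt 3 + (1/9)*a^2) * hu
    linarith [key, mul_nonneg (by linarith : (0:ℝ) ≤ 3*a + Real.sqrt 3*b)
      (by linarith : (0:ℝ) ≤ -a + Real.sqrt 3*b + 4*(Real.sqrt 2*c))]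
  have i2 : (1/9) * (Real.sqrt 2 * a - Real.sqrt 6 * b + 4 * c) ^ 2
      ≤ (1/9) * (Real.sqrt 2 * a + Real.sqrt 6 * b + 4 * c) ^ 2 := by
    have key : (1/9) * (Real.sqrt 2 * a + Real.sqrt 6 * b + 4 * c) ^ 2
        - (1/9) * (Real.sqrt 2 * a - Real.sqrt 6 * b + 4 * c) ^ 2
        = (4/9) * ((Real.sqrt 6 * b) * (Real.sqrt 2 * a + 4*c)) := by ring
    linarith [key, mul_nonneg (mul_nonneg (Real.sqrt_nonneg 6) hb)
      (by linarith [mul_nonneg hu0 ha] : (0:ℝ) ≤ Real.sqrt 2 * a + 4*c)]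
  have i3 : (2/3) * (3 * a ^ 2 + 2 * Real.sqrt 3 * a * b + b ^ 2)
      ≤ (1/9) * (Real.sqrt 2 * a + Real.sqrt 6 * b + 4 * c) ^ 2 := by
    have key : (1/9) * (Real.sqrt 2 * a + Real.sqrt 6 * b + 4 * c) ^ 2
        - (2/3) * (3 * a ^ 2 + 2 * Real.sqrt 3 * a * b + b ^ 2)
        = (8/9) * ((Real.sqrt 2*c - a) * (2*a + Real.sqrt 3*b + Real.sqrt 2*c)) := by
      linear_combination ((8/9)*b*c + (1/9)*b^2*Real.sqrt 6 + (1/9)*b^2*Real.sqrt 2*Real.sqrt 3 + (2/9)*a*b*Real.sqrt 2) * h6 + ((-8/9)*c^2 + (1/9)*b^2*Real.sqrt 3^2 + (2/9)*a*b*Real.sqrt 3 + (1/9)*a^2) * hu + ((2/9)*b^2) * hv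
    linarith [key, mul_nonneg (by linarith : (0:ℝ) ≤ Real.sqrt 2*c - a)
      (by linarith : (0:ℝ) ≤ 2*a + Real.sqrt 3*b + Real.sqrt 2*c)]
  have i4 : (2/3) * (3 * a ^ 2 - 2 * Real.sqrt 3 * a * b + b ^ 2)
      ≤ (1/9) * (Real.sqrt 2 * a + Real.sqrt 6 * b + 4 * c) ^ 2 := by
    have key : (1/9) * (Real.sqrt 2 * a + Real.sqrt 6 * b + 4 * c) ^ 2
        - (2/3) * (3 * a ^ 2 - 2 * Real.sqrt 3 * a * b + b ^ 2)
        = (8/9) * ((-a + Real.sqrt 3*b + Real.sqrt 2*c) * (2*a + Real.sqrt 2*c)) := by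
      linear_combination ((8/9)*b*c + (1/9)*b^2*Real.sqrt 6 + (1/9)*b^2*Real.sqrt 2*Real.sqrt 3 + (2/9)*a*b*Real.sqrt 2) * h6 + ((-8/9)*c^2 + (1/9)*b^2*Real.sqrt 3^2 + (2/9)*a*b*Real.sqrt 3 + (1/9)*a^2) * hu + ((2/9)*b^2) * hv
    linarith [key, mul_nonneg (by linarith : (0:ℝ) ≤ -a + Real.sqrt 3*b + Real.sqrt 2*c)
      (by linarith : (0:ℝ) ≤ 2*a + Real.sqrt 2*c)]
  have i5 : (8/3) * b ^ 2 ≤ (1/9) * (Real.sqrt 2 * a + Real.sqrt 6 * b + 4 * c) ^ 2 := by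
    have key : (1/9) * (Real.sqrt 2 * a + Real.sqrt 6 * b + 4 * c) ^ 2 - (8/3) * b ^ 2
        = (2/9) * ((a - Real.sqrt 3*b + 2*(Real.sqrt 2*c)) * (a + 3*(Real.sqrt 3*b) + 2*(Real.sqrt 2*c))) := by
      linear_combination ((8/9)*b*c + (1/9)*b^2*Real.sqrt 6 + (1/9)*b^2*Real.sqrt 2*Real.sqrt 3 + (2/9)*a*b*Real.sqrt 2) * h6 + ((-8/9)*c^2 + (1/9)*b^2*Real.sqrt 3^2 + (2/9)*a*b*Real.sqrt 3 + (1/9)*a^2) * hu + ((8/9)*b^2) * hv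
    linarith [key, mul_nonneg (by linarith : (0:ℝ) ≤ a - Real.sqrt 3*b + 2*(Real.sqrt 2*c))
      (by linarith : (0:ℝ) ≤ a + 3*(Real.sqrt 3*b) + 2*(Real.sqrt 2*c))]
  rw [gTetra, max_eq_right i0, max_eq_left (max_le i2 i3), max_eq_left (max_le i4 i5)]

lemma gTetra_eq_q3 (a b c : ℝ) (ha : 0 ≤ a) (hb : 0 ≤ b) (hba : b ≤ Real.sqrt 3 * a)
    (hca : Real.sqrt 2 * c ≤ a) (hP1 : 0 ≤ a + Real.sqrt 3 * b + 2*(Real.sqrt 2 * c)) :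
    gTetra a b c = (2/3) * (3 * a ^ 2 + 2 * Real.sqrt 3 * a * b + b ^ 2) := by
  have hvb0 : 0 ≤ Real.sqrt 3 * b := mul_nonneg hv0 hb
  have hva0 : 0 ≤ Real.sqrt 3 * a := mul_nonneg hv0 ha
  have h3a : Real.sqrt 3 * (Real.sqrt 3 * a) = 3 * a := by linear_combination a * hv
  have hvb3a : Real.sqrt 3 * b ≤ 3 * a := by
    have := mul_le_mul_of_nonneg_left hba hv0; linarith
  have i1 : (1/9) * (Real.sqrt 2 * a + Real.sqrt 6 * b + 4 * c) ^ 2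
      ≤ (2/3) * (3 * a ^ 2 + 2 * Real.sqrt 3 * a * b + b ^ 2) := by
    have key : (2/3) * (3 * a ^ 2 + 2 * Real.sqrt 3 * a * b + b ^ 2)
        - (1/9) * (Real.sqrt 2 * a + Real.sqrt 6 * b + 4 * c) ^ 2
        = (8/9) * ((a - Real.sqrt 2*c) * (2*a + Real.sqrt 3*b + Real.sqrt 2*c)) := by
      linear_combination ((-8/9)*b*c + (-1/9)*b^2*Real.sqrt 6 + (-1/9)*b^2*Real.sqrt 2*Real.sqrt 3 + (-2/9)*a*b*Real.sqrt 2) * h6 + ((8/9)*c^2 + (-1/9)*b^2*Real.sqrt 3^2 + (-2/9)*a*b*Real.sqrt 3 + (-1/9)*a^2) * hu + ((-2/9)*b^2) * hv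
    linarith [key, mul_nonneg (by linarith : (0:ℝ) ≤ a - Real.sqrt 2*c)
      (by linarith : (0:ℝ) ≤ 2*a + Real.sqrt 3*b + Real.sqrt 2*c)]
  have i0 : (8/9) * (a ^ 2 - 2 * Real.sqrt 2 * a * c + 2 * c ^ 2)
      ≤ (2/3) * (3 * a ^ 2 + 2 * Real.sqrt 3 * a * b + b ^ 2) := by
    have key : (2/3) * (3 * a ^ 2 + 2 * Real.sqrt 3 * a * b + b ^ 2)
        - (8/9) * (a ^ 2 - 2 * Real.sqrt 2 * a * c + 2 * c ^ 2)
        = (2/9) * ((a + Real.sqrt 3*b + 2*(Real.sqrt 2*c)) * (5*a + Real.sqrt 3*b - 2*(Real.sqrt 2*c))) := by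
      linear_combination ((8/9)*c^2) * hu + ((-2/9)*b^2) * hv
    linarith [key, mul_nonneg hP1 (by linarith : (0:ℝ) ≤ 5*a + Real.sqrt 3*b - 2*(Real.sqrt 2*c))]
  have i2 : (1/9) * (Real.sqrt 2 * a - Real.sqrt 6 * b + 4 * c) ^ 2
      ≤ (2/3) * (3 * a ^ 2 + 2 * Real.sqrt 3 * a * b + b ^ 2) := by
    have key : (2/3) * (3 * a ^ 2 + 2 * Real.sqrt 3 * a * b + b ^ 2)
        - (1/9) * (Real.sqrt 2 * a - Real.sqrt 6 * b + 4 * c) ^ 2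
        = (8/9) * ((a + Real.sqrt 3*b - Real.sqrt 2*c) * (2*a + Real.sqrt 2*c)) := by
      linear_combination ((8/9)*b*c + (-1/9)*b^2*Real.sqrt 6 + (-1/9)*b^2*Real.sqrt 2*Real.sqrt 3 + (2/9)*a*b*Real.sqrt 2) * h6 + ((8/9)*c^2 + (-1/9)*b^2*Real.sqrt 3^2 + (2/9)*a*b*Real.sqrt 3 + (-1/9)*a^2) * hu + ((-2/9)*b^2) * hv
    linarith [key, mul_nonneg (by linarith : (0:ℝ) ≤ a + Real.sqrt 3*b - Real.sqrt 2*c)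
      (by linarith : (0:ℝ) ≤ 2*a + Real.sqrt 2*c)]
  have i4 : (2/3) * (3 * a ^ 2 - 2 * Real.sqrt 3 * a * b + b ^ 2)
      ≤ (2/3) * (3 * a ^ 2 + 2 * Real.sqrt 3 * a * b + b ^ 2) := by
    have key : (2/3) * (3 * a ^ 2 + 2 * Real.sqrt 3 * a * b + b ^ 2)
        - (2/3) * (3 * a ^ 2 - 2 * Real.sqrt 3 * a * b + b ^ 2)
        = (8/3) * (b * (Real.sqrt 3 * a)) := by ring
    linarith [key, mul_nonneg hb hva0]
  have i5 : (8/3) * b ^ 2 ≤ (2/3) * (3 * a ^ 2 + 2 * Real.sqrt 3 * a * b + b ^ 2) := by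
    have key : (2/3) * (3 * a ^ 2 + 2 * Real.sqrt 3 * a * b + b ^ 2) - (8/3) * b ^ 2
        = (2/3) * ((Real.sqrt 3*a - b) * (Real.sqrt 3*a + 3*b)) := by
      linear_combination ((-2/3)*a^2) * hv
    linarith [key, mul_nonneg (by linarith : (0:ℝ) ≤ Real.sqrt 3*a - b)
      (by linarith : (0:ℝ) ≤ Real.sqrt 3*a + 3*b)]
  rw [gTetra, max_eq_right i2, max_eq_right (max_le i0 i1), max_eq_left (max_le i4 i5)]

lemma gTetra_eq_q0 (a b c : ℝ) (ha : 0 ≤ a) (hb : 0 ≤ b) (hba : b ≤ Real.sqrt 3 * a)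
    (hc : c ≤ 0) (hP1n : a + Real.sqrt 3 * b + 2*(Real.sqrt 2 * c) ≤ 0) :
    gTetra a b c = (8/9) * (a ^ 2 - 2 * Real.sqrt 2 * a * c + 2 * c ^ 2) := by
  have hvb0 : 0 ≤ Real.sqrt 3 * b := mul_nonneg hv0 hb
  have hva0 : 0 ≤ Real.sqrt 3 * a := mul_nonneg hv0 ha
  have h3a : Real.sqrt 3 * (Real.sqrt 3 * a) = 3 * a := by linear_combination a * hv
  have hvb3a : Real.sqrt 3 * b ≤ 3 * a := by
    have := mul_le_mul_of_nonneg_left hba hv0; linarith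
  have huc : Real.sqrt 2 * c ≤ 0 := by
    have := mul_le_mul_of_nonneg_left hc hu0; simpa using this
  have i1 : (1/9) * (Real.sqrt 2 * a + Real.sqrt 6 * b + 4 * c) ^ 2
      ≤ (8/9) * (a ^ 2 - 2 * Real.sqrt 2 * a * c + 2 * c ^ 2) := by
    have key : (8/9) * (a ^ 2 - 2 * Real.sqrt 2 * a * c + 2 * c ^ 2)
        - (1/9) * (Real.sqrt 2 * a + Real.sqrt 6 * b + 4 * c) ^ 2
        = (2/9) * ((3*a + Real.sqrt 3*b) * (a - Real.sqrt 3*b - 4*(Real.sqrt 2*c))) := by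
      linear_combination ((-8/9)*b*c + (-1/9)*b^2*Real.sqrt 6 + (-1/9)*b^2*Real.sqrt 2*Real.sqrt 3 + (-2/9)*a*b*Real.sqrt 2) * h6 + ((-1/9)*b^2*Real.sqrt 3^2 + (-2/9)*a*b*Real.sqrt 3 + (-1/9)*a^2) * hu
    linarith [key, mul_nonneg (by linarith : (0:ℝ) ≤ 3*a + Real.sqrt 3*b)
      (by linarith : (0:ℝ) ≤ a - Real.sqrt 3*b - 4*(Real.sqrt 2*c))]
  have i2 : (1/9) * (Real.sqrt 2 * a - Real.sqrt 6 * b + 4 * c) ^ 2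
      ≤ (8/9) * (a ^ 2 - 2 * Real.sqrt 2 * a * c + 2 * c ^ 2) := by
    have key : (8/9) * (a ^ 2 - 2 * Real.sqrt 2 * a * c + 2 * c ^ 2)
        - (1/9) * (Real.sqrt 2 * a - Real.sqrt 6 * b + 4 * c) ^ 2
        = (2/9) * ((3*a - Real.sqrt 3*b) * (a + Real.sqrt 3*b - 4*(Real.sqrt 2*c))) := by
      linear_combination ((8/9)*b*c + (-1/9)*b^2*Real.sqrt 6 + (-1/9)*b^2*Real.sqrt 2*Real.sqrt 3 + (2/9)*a*b*Real.sqrt 2) * h6 + ((-1/9)*b^2*Real.sqrt 3^2 + (2/9)*a*b*Real.sqrt 3 + (-1/9)*a^2) * hu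
    linarith [key, mul_nonneg (by linarith : (0:ℝ) ≤ 3*a - Real.sqrt 3*b)
      (by linarith : (0:ℝ) ≤ a + Real.sqrt 3*b - 4*(Real.sqrt 2*c))]
  have i3 : (2/3) * (3 * a ^ 2 + 2 * Real.sqrt 3 * a * b + b ^ 2)
      ≤ (8/9) * (a ^ 2 - 2 * Real.sqrt 2 * a * c + 2 * c ^ 2) := by
    have key : (8/9) * (a ^ 2 - 2 * Real.sqrt 2 * a * c + 2 * c ^ 2)
        - (2/3) * (3 * a ^ 2 + 2 * Real.sqrt 3 * a * b + b ^ 2)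
        = (2/9) * ((-a - Real.sqrt 3*b - 2*(Real.sqrt 2*c)) * (5*a + Real.sqrt 3*b - 2*(Real.sqrt 2*c))) := by
      linear_combination ((-8/9)*c^2) * hu + ((2/9)*b^2) * hv
    linarith [key, mul_nonneg (by linarith : (0:ℝ) ≤ -a - Real.sqrt 3*b - 2*(Real.sqrt 2*c))
      (by linarith : (0:ℝ) ≤ 5*a + Real.sqrt 3*b - 2*(Real.sqrt 2*c))]
  have i4 : (2/3) * (3 * a ^ 2 - 2 * Real.sqrt 3 * a * b + b ^ 2)
      ≤ (8/9) * (a ^ 2 - 2 * Real.sqrt 2 * a * c + 2 * c ^ 2) := by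
    have key : (8/9) * (a ^ 2 - 2 * Real.sqrt 2 * a * c + 2 * c ^ 2)
        - (2/3) * (3 * a ^ 2 - 2 * Real.sqrt 3 * a * b + b ^ 2)
        = (2/9) * ((5*a - Real.sqrt 3*b - 2*(Real.sqrt 2*c)) * (-a + Real.sqrt 3*b - 2*(Real.sqrt 2*c))) := by
      linear_combination ((-8/9)*c^2) * hu + ((2/9)*b^2) * hv
    linarith [key, mul_nonneg (by linarith : (0:ℝ) ≤ 5*a - Real.sqrt 3*b - 2*(Real.sqrt 2*c))
      (by linarith : (0:ℝ) ≤ -a + Real.sqrt 3*b - 2*(Real.sqrt 2*c))]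
  have i5 : (8/3) * b ^ 2 ≤ (8/9) * (a ^ 2 - 2 * Real.sqrt 2 * a * c + 2 * c ^ 2) := by
    have key : (8/9) * (a ^ 2 - 2 * Real.sqrt 2 * a * c + 2 * c ^ 2) - (8/3) * b ^ 2
        = (8/9) * ((a + Real.sqrt 3*b - Real.sqrt 2*c) * (a - Real.sqrt 3*b - Real.sqrt 2*c)) := by
      linear_combination ((-8/9)*c^2) * hu + ((8/9)*b^2) * hv
    linarith [key, mul_nonneg (by linarith : (0:ℝ) ≤ a + Real.sqrt 3*b - Real.sqrt 2*c)
      (by linarith : (0:ℝ) ≤ a - Real.sqrt 3*b - Real.sqrt 2*c)]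
  rw [gTetra, max_eq_left i1, max_eq_left (max_le i2 i3), max_eq_left (max_le i4 i5)]

noncomputable def Hf (K A B φ : ℝ) : ℝ :=
  K * (A^2 * (Real.cos φ^3/3 - Real.cos φ) + (2*A*B/3) * Real.sin φ^3 - (B^2/3) * Real.cos φ^3)

lemma piece_integral (K A B l u : ℝ) :
    ∫ φ in l..u, K * (A * Real.sin φ + B * Real.cos φ)^2 * Real.sin φ
      = Hf K A B u - Hf K A B l := by
  apply intervalIntegral.integral_eq_sub_of_hasDerivAt (f := fun φ => Hf K A B φ)
  · intro x _
    have hc := Real.hasDerivAt_cos x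
    have hs := Real.hasDerivAt_sin x
    have h1 : HasDerivAt (fun φ : ℝ => Hf K A B φ)
        (K * (A^2 * ((3 * Real.cos x^2 * (-Real.sin x))/3 - (-Real.sin x))
          + (2*A*B/3) * (3 * Real.sin x^2 * Real.cos x)
          - (B^2/3) * (3 * Real.cos x^2 * (-Real.sin x)))) x := by
      unfold Hf
      exact (((((hc.pow 3).div_const 3).sub hc).const_mul (A^2)).add
        (((hs.pow 3).const_mul (2*A*B/3))) |>.sub ((hc.pow 3).const_mul (B^2/3))).const_mul K
    refine h1.congr_deriv ?_; symm
    linear_combination (K * A^2 * Real.sin x) * (Real.sin_sq_add_cos_sq x)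
  · apply Continuous.intervalIntegrable
    fun_prop

lemma cont_integrand (θ : ℝ) :
    Continuous (fun φ : ℝ => gTetra (Real.cos θ * Real.sin φ) (Real.sin θ * Real.sin φ) (Real.cos φ) * Real.sin φ) := by
  unfold gTetra
  fun_prop

noncomputable def Efun (θ : ℝ) : ℝ :=
  (16/27) * ((Real.cos θ*(2*Real.cos θ^2+1) + Real.sqrt 3*Real.sin θ*(Real.cos θ^2+1)) / Real.sqrt (Real.cos θ^2+2)
    + (((Real.cos θ+Real.sqrt 3*Real.sin θ)/2)*(2*((Real.cos θ+Real.sqrt 3*Real.sin θ)/2)^2+1)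
       + Real.sqrt 3*((Real.sqrt 3*Real.cos θ-Real.sin θ)/2)*(((Real.cos θ+Real.sqrt 3*Real.sin θ)/2)^2+1)) / Real.sqrt (((Real.cos θ+Real.sqrt 3*Real.sin θ)/2)^2+2)
    + 11/4 + Real.cos θ*((Real.cos θ+Real.sqrt 3*Real.sin θ)/2))

lemma inner_eval (θ : ℝ) (hs0 : 0 ≤ Real.sin θ) (h3c : Real.sin θ ≤ Real.sqrt 3 * Real.cos θ) :
    (∫ φ in (0:ℝ)..π,
      gTetra (Real.cos θ * Real.sin φ) (Real.sin θ * Real.sin φ) (Real.cos φ) * Real.sin φ)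
      = Efun θ := by
  set c := Real.cos θ with hcdef
  set s := Real.sin θ with hsdef
  have hvp : (0:ℝ) < Real.sqrt 3 := Real.sqrt_pos.mpr (by norm_num)
  have hc0 : 0 ≤ c := by
    have h1 : 0 ≤ Real.sqrt 3 * c := le_trans hs0 h3c
    exact le_of_mul_le_mul_left (by simpa using h1) hvp
  have hpy : s^2 + c^2 = 1 := Real.sin_sq_add_cos_sq θ
  set m : ℝ := (c + Real.sqrt 3 * s)/2 with hmdef
  have hm0 : 0 ≤ m := by
    have := mul_nonneg hv0 hs0; rw [hmdef]; positivity
  -- r and rho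
  set r : ℝ := Real.sqrt (c^2+2) with hrdef
  set ρ : ℝ := Real.sqrt (m^2+2) with hρdef
  have hr2 : r^2 = c^2+2 := Real.sq_sqrt (by positivity)
  have hρ2 : ρ^2 = m^2+2 := Real.sq_sqrt (by positivity)
  have hr0 : 0 < r := Real.sqrt_pos.mpr (by positivity)
  have hρ0 : 0 < ρ := Real.sqrt_pos.mpr (by positivity)
  have hcr : c ≤ r := by
    have h1 : Real.sqrt (c^2) ≤ r := Real.sqrt_le_sqrt (by nlinarith)
    rwa [Real.sqrt_sq hc0] at h1
  have hmρ : m ≤ ρ := by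
    have h1 : Real.sqrt (m^2) ≤ ρ := Real.sqrt_le_sqrt (by nlinarith)
    rwa [Real.sqrt_sq hm0] at h1
  set φ₁ : ℝ := Real.arccos (c/r) with hφ₁def
  set φ₂ : ℝ := Real.arccos (-(m/ρ)) with hφ₂def
  have hx1a : (-1:ℝ) ≤ c/r := by have h1 : (0:ℝ) ≤ c/r := by positivity
                                 linarith
  have hx1b : c/r ≤ 1 := by rw [div_le_one hr0]; exact hcr
  have hx2a : (-1:ℝ) ≤ -(m/ρ) := by
    have h1 : m/ρ ≤ 1 := by rw [div_le_one hρ0]; exact hmρ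
    linarith
  have hx2b : -(m/ρ) ≤ 1 := le_trans (neg_nonpos_of_nonneg (by positivity)) zero_le_one
  have hcos1 : Real.cos φ₁ = c/r := Real.cos_arccos hx1a hx1b
  have hcos2 : Real.cos φ₂ = -(m/ρ) := Real.cos_arccos hx2a hx2b
  have hsin1 : Real.sin φ₁ = Real.sqrt 2 / r := by
    rw [hφ₁def, Real.sin_arccos,
      show 1-(c/r)^2 = (Real.sqrt 2/r)^2 by field_simp; linear_combination hr2 - hu]
    exact Real.sqrt_sq (by positivity)
  have hsin2 : Real.sin φ₂ = Real.sqrt 2 / ρ := by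
    rw [hφ₂def, Real.sin_arccos,
      show 1-(-(m/ρ))^2 = (Real.sqrt 2/ρ)^2 by field_simp; linear_combination hρ2 - hu]
    exact Real.sqrt_sq (by positivity)
  have hφ₁0 : 0 ≤ φ₁ := Real.arccos_nonneg _
  have hφ₁half : φ₁ ≤ π/2 := Real.arccos_le_pi_div_two.mpr (by positivity)
  have hφ₂half : π/2 ≤ φ₂ := by
    have h1 : Real.arcsin (-(m/ρ)) ≤ 0 := Real.arcsin_nonpos.mpr (neg_nonpos_of_nonneg (by positivity))
    rw [hφ₂def, Real.arccos]
    linarith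
  have hφ₂pi : φ₂ ≤ π := Real.arccos_le_pi _
  have hφ₁₂ : φ₁ ≤ φ₂ := le_trans hφ₁half hφ₂half
  -- sign functions
  have hψ : ∀ x : ℝ, Real.sqrt 2 * Real.cos x - c * Real.sin x = r * Real.sin (φ₁ - x) := by
    intro x
    rw [Real.sin_sub, hcos1, hsin1]
    field_simp
  have hw : ∀ x : ℝ, m * Real.sin x + Real.sqrt 2 * Real.cos x = ρ * Real.sin (φ₂ - x) := by
    intro x
    rw [Real.sin_sub, hcos2, hsin2]
    field_simp
    ring
  -- integrability
  have hIab : ∀ a b : ℝ, IntervalIntegrable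
      (fun φ => gTetra (c * Real.sin φ) (s * Real.sin φ) (Real.cos φ) * Real.sin φ)
      MeasureTheory.volume a b := fun a b => ((cont_integrand θ).intervalIntegrable a b)
  have hpi : (0:ℝ) < π := Real.pi_pos
  rw [← intervalIntegral.integral_add_adjacent_intervals (hIab 0 φ₁) (hIab φ₁ π),
      ← intervalIntegral.integral_add_adjacent_intervals (hIab φ₁ φ₂) (hIab φ₂ π)]
  have e1 : (∫ φ in (0:ℝ)..φ₁, gTetra (c * Real.sin φ) (s * Real.sin φ) (Real.cos φ) * Real.sin φ)
      = Hf (1/9) (Real.sqrt 2*c + Real.sqrt 6*s) 4 φ₁ - Hf (1/9) (Real.sqrt 2*c + Real.sqrt 6*s) 4 0 := by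
    rw [← piece_integral]
    apply intervalIntegral.integral_congr
    intro x hx
    rw [Set.uIcc_of_le hφ₁0] at hx
    obtain ⟨hx0, hx1⟩ := hx
    have hxπ : x ≤ π := by linarith
    have hsx : 0 ≤ Real.sin x := Real.sin_nonneg_of_nonneg_of_le_pi hx0 hxπ
    have ha : 0 ≤ c * Real.sin x := mul_nonneg hc0 hsx
    have hb : 0 ≤ s * Real.sin x := mul_nonneg hs0 hsx
    have hba : s * Real.sin x ≤ Real.sqrt 3 * (c * Real.sin x) := by
      have h := mul_le_mul_of_nonneg_right h3c hsx; linarith [h]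
    have hac : c * Real.sin x ≤ Real.sqrt 2 * Real.cos x := by
      have h := hψ x
      have h2 : 0 ≤ Real.sin (φ₁ - x) :=
        Real.sin_nonneg_of_nonneg_of_le_pi (by linarith) (by linarith)
      have h3 := mul_nonneg hr0.le h2
      linarith
    dsimp only
    rw [gTetra_eq_q1 _ _ _ ha hb hba hac]
    ring
  have e2 : (∫ φ in φ₁..φ₂, gTetra (c * Real.sin φ) (s * Real.sin φ) (Real.cos φ) * Real.sin φ)
      = Hf (2/3) (Real.sqrt 3*c + s) 0 φ₂ - Hf (2/3) (Real.sqrt 3*c + s) 0 φ₁ := by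
    rw [← piece_integral]
    apply intervalIntegral.integral_congr
    intro x hx
    rw [Set.uIcc_of_le hφ₁₂] at hx
    obtain ⟨hx0, hx1⟩ := hx
    have hx0' : 0 ≤ x := le_trans hφ₁0 hx0
    have hxπ : x ≤ π := le_trans hx1 hφ₂pi
    have hsx : 0 ≤ Real.sin x := Real.sin_nonneg_of_nonneg_of_le_pi hx0' hxπ
    have ha : 0 ≤ c * Real.sin x := mul_nonneg hc0 hsx
    have hb : 0 ≤ s * Real.sin x := mul_nonneg hs0 hsx
    have hba : s * Real.sin x ≤ Real.sqrt 3 * (c * Real.sin x) := by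
      have h := mul_le_mul_of_nonneg_right h3c hsx; linarith [h]
    have hca : Real.sqrt 2 * Real.cos x ≤ c * Real.sin x := by
      have h := hψ x
      have h2 : 0 ≤ Real.sin (x - φ₁) :=
        Real.sin_nonneg_of_nonneg_of_le_pi (by linarith) (by linarith)
      have h3 : Real.sin (φ₁ - x) ≤ 0 := by
        rw [show φ₁ - x = -(x - φ₁) by ring, Real.sin_neg]; linarith
      have h5 : r * Real.sin (φ₁ - x) ≤ 0 := by
        have h6 := mul_le_mul_of_nonneg_left h3 hr0.le
        simpa using h6
      linarith
    have hP1 : 0 ≤ c * Real.sin x + Real.sqrt 3 * (s * Real.sin x) + 2*(Real.sqrt 2 * Real.cos x) := by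
      have h := hw x
      have h2 : 0 ≤ Real.sin (φ₂ - x) :=
        Real.sin_nonneg_of_nonneg_of_le_pi (by linarith) (by linarith)
      have h3 := mul_nonneg hρ0.le h2
      have h4 : 0 ≤ m * Real.sin x + Real.sqrt 2 * Real.cos x := by linarith
      rw [hmdef] at h4; linarith
    dsimp only
    rw [gTetra_eq_q3 _ _ _ ha hb hba hca hP1]
    linear_combination (-(2:ℝ)/3*c^2*Real.sin x^3) * hv
  have e3 : (∫ φ in φ₂..π, gTetra (c * Real.sin φ) (s * Real.sin φ) (Real.cos φ) * Real.sin φ)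
      = Hf (8/9) c (-Real.sqrt 2) π - Hf (8/9) c (-Real.sqrt 2) φ₂ := by
    rw [← piece_integral]
    apply intervalIntegral.integral_congr
    intro x hx
    rw [Set.uIcc_of_le hφ₂pi] at hx
    obtain ⟨hx0, hx1⟩ := hx
    have hx0' : 0 ≤ x := by linarith
    have hsx : 0 ≤ Real.sin x := Real.sin_nonneg_of_nonneg_of_le_pi hx0' hx1
    have ha : 0 ≤ c * Real.sin x := mul_nonneg hc0 hsx
    have hb : 0 ≤ s * Real.sin x := mul_nonneg hs0 hsx
    have hba : s * Real.sin x ≤ Real.sqrt 3 * (c * Real.sin x) := by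
      have h := mul_le_mul_of_nonneg_right h3c hsx; linarith [h]
    have hcx : Real.cos x ≤ 0 :=
      Real.cos_nonpos_of_pi_div_two_le_of_le (by linarith) (by linarith)
    have hP1n : c * Real.sin x + Real.sqrt 3 * (s * Real.sin x) + 2*(Real.sqrt 2 * Real.cos x) ≤ 0 := by
      have h := hw x
      have h2 : 0 ≤ Real.sin (x - φ₂) :=
        Real.sin_nonneg_of_nonneg_of_le_pi (by linarith) (by linarith)
      have h3 : Real.sin (φ₂ - x) ≤ 0 := by
        rw [show φ₂ - x = -(x - φ₂) by ring, Real.sin_neg]; linarith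
      have h5 : ρ * Real.sin (φ₂ - x) ≤ 0 := by
        have h6 := mul_le_mul_of_nonneg_left h3 hρ0.le
        simpa using h6
      have h4 : m * Real.sin x + Real.sqrt 2 * Real.cos x ≤ 0 := by linarith
      rw [hmdef] at h4; linarith
    dsimp only
    rw [gTetra_eq_q0 _ _ _ ha hb hba hcx hP1n]
    linear_combination (-(8:ℝ)/9*Real.cos x^2*Real.sin x) * hu
  rw [e1, e2, e3]
  have hri : r * r⁻¹ = 1 := mul_inv_cancel₀ hr0.ne'
  have hρi : ρ * ρ⁻¹ = 1 := mul_inv_cancel₀ hρ0.ne'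
  simp only [Efun, Hf]
  rw [← hcdef, ← hsdef, ← hmdef, ← hrdef, ← hρdef,
    hcos1, hsin1, hcos2, hsin2, Real.cos_zero, Real.sin_zero, Real.cos_pi, Real.sin_pi]
  apply mul_right_cancel₀ (show r^3*ρ^3 ≠ 0 by positivity)
  linear_combination
    ((-16/27)*s*Real.sqrt 3*r^2*ρ^3 + (8/27)*s*Real.sqrt 2^3*Real.sqrt 6*ρ^3 + (8/27)*s*Real.sqrt 2^3*Real.sqrt 6*r*r⁻¹*ρ^3 + (8/27)*s*Real.sqrt 2^3*Real.sqrt 6*r^2*r⁻¹^2*ρ^3 + (-16/27)*c*r^2*ρ^3 + (8/27)*c*Real.sqrt 2^4*ρ^3 + (8/27)*c*Real.sqrt 2^4*r*r⁻¹*ρ^3 + (8/27)*c*Real.sqrt 2^4*r^2*r⁻¹^2*ρ^3 + (2/3)*c*s^2*r^2*ρ^3 + (-1/9)*c*s^2*Real.sqrt 6^2*r^2*ρ^3 + (20/27)*c^2*s*Real.sqrt 3*r^2*ρ^3 + (-2/9)*c^2*s*Real.sqrt 2*Real.sqrt 6*r^2*ρ^3 + (-16/27)*c^3*ρ^3 +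 (-16/27)*c^3*r*r⁻¹*ρ^3 + (-32/27)*c^3*r^2*ρ^3 + (-16/27)*c^3*r^2*r⁻¹^2*ρ^3 + (2/3)*c^3*Real.sqrt 3^2*r^2*ρ^3 + (-1/9)*c^3*Real.sqrt 2^2*r^2*ρ^3 + (-2/9)*c^3*s^2*ρ^3 + (-2/9)*c^3*s^2*r*r⁻¹*ρ^3 + (-2/9)*c^3*s^2*r^2*r⁻¹^2*ρ^3 + (1/27)*c^3*s^2*Real.sqrt 6^2*ρ^3 + (1/27)*c^3*s^2*Real.sqrt 6^2*r*r⁻¹*ρ^3 + (1/27)*c^3*s^2*Real.sqrt 6^2*r^2*r⁻¹^2*ρ^3 + (-4/9)*c^4*s*Real.sqrt 3*ρ^3 + (-4/9)*c^4*s*Real.sqrt 3*r*r⁻¹*ρ^3 + (-4/9)*c^4*s*Real.sqrt 3*r^2*r⁻¹^2*ρ^3 + (2/27)*c^4*s*Real.sqrt 2*Real.sqrt 6*ρ^3 + (2/27)*c^4*s*Real.sqrt 2*Real.sqrt 6*r*r⁻¹*ρ^3 + (2/27)*c^4*s*Real.sqrt 2*Real.sqrt 6*r^2*r⁻¹^2*ρ^3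 + (-2/9)*c^5*Real.sqrt 3^2*ρ^3 + (-2/9)*c^5*Real.sqrt 3^2*r*r⁻¹*ρ^3 + (-2/9)*c^5*Real.sqrt 3^2*r^2*r⁻¹^2*ρ^3 + (1/27)*c^5*Real.sqrt 2^2*ρ^3 + (1/27)*c^5*Real.sqrt 2^2*r*r⁻¹*ρ^3 + (1/27)*c^5*Real.sqrt 2^2*r^2*r⁻¹^2*ρ^3) * hri +
    ((-16/27)*m*r^3*ρ^2 + (-32/27)*m^3*r^3*ρ^2 + (-8/27)*Real.sqrt 2^2*m^3*r^3 + (-8/27)*Real.sqrt 2^2*m^3*r^3*ρ*ρ⁻¹ + (-8/27)*Real.sqrt 2^2*m^3*r^3*ρ^2*ρ⁻¹^2 + (8/27)*s*Real.sqrt 3*r^3*ρ^2 + (8/27)*s*Real.sqrt 3*m^2*r^3*ρ^2 + (2/3)*s^2*m*r^3*ρ^2 + (-2/9)*s^2*m^3*r^3 + (-2/9)*s^2*m^3*r^3*ρ*ρ⁻¹ + (-2/9)*s^2*m^3*r^3*ρ^2*ρ⁻¹^2 + (-8/27)*c*Real.sqrt 3^2*r^3*ρ^2 + (-8/27)*c*Real.sqrt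 3^2*m^2*r^3*ρ^2 + (16/27)*c*Real.sqrt 2^4*r^3 + (16/27)*c*Real.sqrt 2^4*r^3*ρ*ρ⁻¹ + (16/27)*c*Real.sqrt 2^4*r^3*ρ^2*ρ⁻¹^2 + (4/3)*c*s*Real.sqrt 3*m*r^3*ρ^2 + (-4/9)*c*s*Real.sqrt 3*m^3*r^3 + (-4/9)*c*s*Real.sqrt 3*m^3*r^3*ρ*ρ⁻¹ + (-4/9)*c*s*Real.sqrt 3*m^3*r^3*ρ^2*ρ⁻¹^2 + (-8/9)*c^2*m*r^3*ρ^2 + (8/27)*c^2*m^3*r^3 + (8/27)*c^2*m^3*r^3*ρ*ρ⁻¹ + (8/27)*c^2*m^3*r^3*ρ^2*ρ⁻¹^2 + (2/3)*c^2*Real.sqrt 3^2*m*r^3*ρ^2 + (-2/9)*c^2*Real.sqrt 3^2*m^3*r^3 + (-2/9)*c^2*Real.sqrt 3^2*m^3*r^3*ρ*ρ⁻¹ + (-2/9)*c^2*Real.sqrt 3^2*m^3*r^3*ρ^2*ρ⁻¹^2) * hρi +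
    ((8/27)*s*Real.sqrt 2^3*ρ^3 + (2/27)*s^2*Real.sqrt 6*r^3*ρ^3 + (2/27)*s^2*Real.sqrt 2*Real.sqrt 3*r^3*ρ^3 + (4/27)*c*s*Real.sqrt 2*r^3*ρ^3 + (-1/9)*c*s^2*Real.sqrt 6*r^2*ρ^3 + (-1/9)*c*s^2*Real.sqrt 2*Real.sqrt 3*r^2*ρ^3 + (-2/9)*c^2*s*Real.sqrt 2*r^2*ρ^3 + (1/27)*c^3*s^2*Real.sqrt 6*ρ^3 + (1/27)*c^3*s^2*Real.sqrt 2*Real.sqrt 3*ρ^3 + (2/27)*c^4*s*Real.sqrt 2*ρ^3) * h6 +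
    ((-28/27)*r^3*ρ + (-16/27)*m*r^3 + (-32/27)*m^3*r^3 + (8/27)*Real.sqrt 2^2*r^3*ρ + (-16/27)*s*Real.sqrt 3*r^2*ρ + (8/27)*s*Real.sqrt 3*r^3 + (8/27)*s*Real.sqrt 3*m^2*r^3 + (8/27)*s*Real.sqrt 2^4*Real.sqrt 3*ρ + (2/3)*s^2*m*r^3 + (2/27)*s^2*Real.sqrt 2^2*Real.sqrt 3^2*r^3*ρ + (-16/27)*c*r^2*ρ + (-16/27)*c*m*r^3*ρ + (-8/27)*c*Real.sqrt 3^2*r^3 + (-8/27)*c*Real.sqrt 3^2*m^2*r^3 + (8/27)*c*Real.sqrt 2^4*ρ + (4/3)*c*s*Real.sqrt 3*m*r^3 + (4/27)*c*s*Real.sqrt 2^2*Real.sqrt 3*r^3*ρ + (2/3)*c*s^2*r^2*ρ + (-1/9)*c*s^2*Real.sqrt 2^2*Real.sqrt 3^2*r^2*ρ + (16/27)*c^2*r^3*ρ + (-8/9)*c^2*m*r^3 + (2/3)*c^2*Real.sqrt 3^2*m*r^3 + (2/27)*c^2*Real.sqrt 2^2*r^3*ρ + (20/27)*c^2*s*Real.sqrt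 3*r^2*ρ + (-2/9)*c^2*s*Real.sqrt 2^2*Real.sqrt 3*r^2*ρ + (-16/27)*c^3*ρ + (-32/27)*c^3*r^2*ρ + (2/3)*c^3*Real.sqrt 3^2*r^2*ρ + (-1/9)*c^3*Real.sqrt 2^2*r^2*ρ + (-2/9)*c^3*s^2*ρ + (1/27)*c^3*s^2*Real.sqrt 2^2*Real.sqrt 3^2*ρ + (-4/9)*c^4*s*Real.sqrt 3*ρ + (2/27)*c^4*s*Real.sqrt 2^2*Real.sqrt 3*ρ + (-2/9)*c^5*Real.sqrt 3^2*ρ + (1/27)*c^5*Real.sqrt 2^2*ρ) * hρ2 +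
    ((-32/27)*r^3 + (-28/27)*m*r^3*ρ + (-80/27)*m^2*r^3 + (-32/27)*m^4*r^3 + (8/27)*Real.sqrt 2^2*m*r^3*ρ + (-8/27)*Real.sqrt 2^2*m^2*r^3 + (-14/27)*s*Real.sqrt 3*r^3*ρ + (-16/27)*s*Real.sqrt 3*m*r^2*ρ + (-16/27)*s*Real.sqrt 3*m*r^3 + (-8/27)*s*Real.sqrt 3*m^3*r^3 + (4/27)*s*Real.sqrt 2^2*Real.sqrt 3*r^3*ρ + (-4/27)*s*Real.sqrt 2^2*Real.sqrt 3*m*r^3 + (8/27)*s*Real.sqrt 2^4*Real.sqrt 3*m*ρ + (4/3)*s^2*r^3 + (4/9)*s^2*m^2*r^3 + (-8/27)*s^2*Real.sqrt 3^2*r^2*ρ + (-8/27)*s^2*Real.sqrt 3^2*r^3 + (-4/27)*s^2*Real.sqrt 3^2*m^2*r^3 + (-2/27)*s^2*Real.sqrt 2^2*Real.sqrt 3^2*r^3 + (2/27)*s^2*Real.sqrt 2^2*Real.sqrt 3^2*m*r^3*ρ + (4/27)*s^2*Real.sqrt 2^4*Real.sqrt 3^2*ρ + (2/9)*s^3*Real.sqrt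 3*m*r^3 + (-2/27)*s^3*Real.sqrt 3^3*m*r^3 + (1/27)*s^3*Real.sqrt 2^2*Real.sqrt 3^3*r^3*ρ + (1/9)*s^4*Real.sqrt 3^2*r^3 + (-1/27)*s^4*Real.sqrt 3^4*r^3 + (-46/27)*c*r^3*ρ + (-16/27)*c*m*r^2*ρ + (-40/27)*c*m*r^3 + (-16/27)*c*m^2*r^3*ρ + (-16/27)*c*m^3*r^3 + (-8/9)*c*Real.sqrt 3^2*m*r^3 + (-8/27)*c*Real.sqrt 3^2*m^3*r^3 + (4/27)*c*Real.sqrt 2^2*r^3*ρ + (-4/27)*c*Real.sqrt 2^2*m*r^3 + (8/27)*c*Real.sqrt 2^4*m*ρ + (-16/27)*c*s*Real.sqrt 3*r^2*ρ + (44/27)*c*s*Real.sqrt 3*r^3 + (-8/27)*c*s*Real.sqrt 3*m*r^3*ρ + (4/9)*c*s*Real.sqrt 3*m^2*r^3 + (-4/9)*c*s*Real.sqrt 3^3*r^3 + (-4/27)*c*s*Real.sqrt 3^3*m^2*r^3 + (-4/27)*c*s*Real.sqrt 2^2*Real.sqrt 3*r^3 + (4/27)*c*s*Real.sqrt 2^2*Real.sqrt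 3*m*r^3*ρ + (8/27)*c*s*Real.sqrt 2^4*Real.sqrt 3*ρ + (2/3)*c*s^2*m*r^2*ρ + (2/9)*c*s^2*m*r^3 + (-4/27)*c*s^2*Real.sqrt 3^2*r^3*ρ + (4/27)*c*s^2*Real.sqrt 3^2*m*r^3 + (-2/27)*c*s^2*Real.sqrt 3^4*m*r^3 + (1/9)*c*s^2*Real.sqrt 2^2*Real.sqrt 3^2*r^3*ρ + (-1/9)*c*s^2*Real.sqrt 2^2*Real.sqrt 3^2*m*r^2*ρ + (1/3)*c*s^3*Real.sqrt 3*r^2*ρ + (2/9)*c*s^3*Real.sqrt 3*r^3 + (1/27)*c*s^3*Real.sqrt 3^3*r^3 + (-1/27)*c*s^3*Real.sqrt 3^5*r^3 + (-1/18)*c*s^3*Real.sqrt 2^2*Real.sqrt 3^3*r^2*ρ + (-8/27)*c^2*r^2*ρ + (-68/27)*c^2*r^3 + (8/27)*c^2*m*r^3*ρ + (-8/9)*c^2*m^2*r^3 + (8/9)*c^2*Real.sqrt 3^2*r^3 + (8/27)*c^2*Real.sqrt 3^2*m^2*r^3 + (-2/27)*c^2*Real.sqrt 2^2*r^3 + (2/27)*c^2*Real.sqrt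 2^2*m*r^3*ρ + (4/27)*c^2*Real.sqrt 2^4*ρ + (20/27)*c^2*s*Real.sqrt 3*m*r^2*ρ + (-2/9)*c^2*s*Real.sqrt 3*m*r^3 + (2/27)*c^2*s*Real.sqrt 3^3*m*r^3 + (1/9)*c^2*s*Real.sqrt 2^2*Real.sqrt 3*r^3*ρ + (-2/9)*c^2*s*Real.sqrt 2^2*Real.sqrt 3*m*r^2*ρ + (1/3)*c^2*s^2*r^2*ρ + (1/9)*c^2*s^2*r^3 + (10/27)*c^2*s^2*Real.sqrt 3^2*r^2*ρ + (-1/27)*c^2*s^2*Real.sqrt 3^2*r^3 + (-1/6)*c^2*s^2*Real.sqrt 2^2*Real.sqrt 3^2*r^2*ρ + (4/27)*c^3*r^3*ρ + (-16/27)*c^3*m*ρ + (-32/27)*c^3*m*r^2*ρ + (-4/9)*c^3*m*r^3 + (2/3)*c^3*Real.sqrt 3^2*m*r^2*ρ + (4/27)*c^3*Real.sqrt 3^2*m*r^3 + (1/27)*c^3*Real.sqrt 2^2*r^3*ρ + (-1/9)*c^3*Real.sqrt 2^2*m*r^2*ρ + (-8/27)*c^3*s*Real.sqrt 3*ρ +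 (-2/9)*c^3*s*Real.sqrt 3*r^2*ρ + (-1/3)*c^3*s*Real.sqrt 3*r^3 + (1/3)*c^3*s*Real.sqrt 3^3*r^2*ρ + (1/9)*c^3*s*Real.sqrt 3^3*r^3 + (-1/6)*c^3*s*Real.sqrt 2^2*Real.sqrt 3*r^2*ρ + (-2/9)*c^3*s^2*m*ρ + (1/27)*c^3*s^2*Real.sqrt 2^2*Real.sqrt 3^2*m*ρ + (-1/9)*c^3*s^3*Real.sqrt 3*ρ + (1/54)*c^3*s^3*Real.sqrt 2^2*Real.sqrt 3^3*ρ + (-8/27)*c^4*ρ + (-16/27)*c^4*r^2*ρ + (-2/9)*c^4*r^3 + (1/3)*c^4*Real.sqrt 3^2*r^2*ρ + (2/27)*c^4*Real.sqrt 3^2*r^3 + (-1/18)*c^4*Real.sqrt 2^2*r^2*ρ + (-4/9)*c^4*s*Real.sqrt 3*m*ρ + (2/27)*c^4*s*Real.sqrt 2^2*Real.sqrt 3*m*ρ + (-1/9)*c^4*s^2*ρ + (-2/9)*c^4*s^2*Real.sqrt 3^2*ρ + (1/18)*c^4*s^2*Real.sqrt 2^2*Real.sqrt 3^2*ρ + (-2/9)*c^5*Real.sqrt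 3^2*m*ρ + (1/27)*c^5*Real.sqrt 2^2*m*ρ + (-2/9)*c^5*s*Real.sqrt 3*ρ + (-1/9)*c^5*s*Real.sqrt 3^3*ρ + (1/18)*c^5*s*Real.sqrt 2^2*Real.sqrt 3*ρ + (-1/9)*c^6*Real.sqrt 3^2*ρ + (1/54)*c^6*Real.sqrt 2^2*ρ) * hmdef +
    ((-7/27)*Real.sqrt 3^2*r^3*ρ + (2/9)*Real.sqrt 2^2*Real.sqrt 3^2*r^3*ρ + (1/54)*Real.sqrt 2^2*Real.sqrt 3^4*r^3*ρ + (2/3)*s*Real.sqrt 3*r^3 + (-4/27)*s*Real.sqrt 3^3*r^2*ρ + (-5/54)*s*Real.sqrt 3^3*r^3 + (-1/54)*s*Real.sqrt 3^5*r^3 + (-1/27)*s*Real.sqrt 2^2*Real.sqrt 3^3*r^3 + (2/27)*s*Real.sqrt 2^4*Real.sqrt 3^3*ρ + (1/54)*s^2*Real.sqrt 2^2*Real.sqrt 3^4*r^3*ρ + (1/18)*s^3*Real.sqrt 3^3*r^3 + (-1/54)*s^3*Real.sqrt 3^5*r^3 + (4/3)*c*r^2*ρ + (2/3)*c*r^3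 + (-5/18)*c*Real.sqrt 3^2*r^2*ρ + (5/6)*c*Real.sqrt 3^2*r^3 + (-2/9)*c*Real.sqrt 3^4*r^3 + (-1/54)*c*Real.sqrt 3^6*r^3 + (-2/9)*c*Real.sqrt 2^2*Real.sqrt 3^2*r^2*ρ + (-1/9)*c*Real.sqrt 2^2*Real.sqrt 3^2*r^3 + (-1/36)*c*Real.sqrt 2^2*Real.sqrt 3^4*r^2*ρ + (2/9)*c*Real.sqrt 2^4*Real.sqrt 3^2*ρ + (-2/27)*c*s*Real.sqrt 3^3*r^3*ρ + (2/27)*c*s*Real.sqrt 2^2*Real.sqrt 3^3*r^3*ρ + (1/6)*c*s^2*Real.sqrt 3^2*r^2*ρ + (1/6)*c*s^2*Real.sqrt 3^2*r^3 + (-1/54)*c*s^2*Real.sqrt 3^6*r^3 + (-1/36)*c*s^2*Real.sqrt 2^2*Real.sqrt 3^4*r^2*ρ + (-2/27)*c^2*Real.sqrt 3^2*r^3*ρ + (1/9)*c^2*Real.sqrt 2^2*Real.sqrt 3^2*r^3*ρ + (-1/54)*c^2*Real.sqrt 2^2*Real.sqrt 3^4*r^3*ρ + (1/3)*c^2*s*Real.sqrt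 3*r^2*ρ + (1/6)*c^2*s*Real.sqrt 3*r^3 + (5/27)*c^2*s*Real.sqrt 3^3*r^2*ρ + (-1/18)*c^2*s*Real.sqrt 3^3*r^3 + (-1/9)*c^2*s*Real.sqrt 2^2*Real.sqrt 3^3*r^2*ρ + (-4/9)*c^3*ρ + (1/6)*c^3*r^2*ρ + (1/18)*c^3*r^3 + (-11/54)*c^3*Real.sqrt 3^2*ρ + (-5/54)*c^3*Real.sqrt 3^2*r^2*ρ + (-19/54)*c^3*Real.sqrt 3^2*r^3 + (1/6)*c^3*Real.sqrt 3^4*r^2*ρ + (1/18)*c^3*Real.sqrt 3^4*r^3 + (1/54)*c^3*Real.sqrt 3^6*r^3 + (2/27)*c^3*Real.sqrt 2^2*Real.sqrt 3^2*ρ + (-1/6)*c^3*Real.sqrt 2^2*Real.sqrt 3^2*r^2*ρ + (1/108)*c^3*Real.sqrt 2^2*Real.sqrt 3^4*ρ + (1/36)*c^3*Real.sqrt 2^2*Real.sqrt 3^4*r^2*ρ + (-1/18)*c^3*s^2*Real.sqrt 3^2*ρ + (1/108)*c^3*s^2*Real.sqrt 2^2*Real.sqrt 3^4*ρ + (-1/9)*c^4*s*Real.sqrt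 3*ρ + (-1/9)*c^4*s*Real.sqrt 3^3*ρ + (1/27)*c^4*s*Real.sqrt 2^2*Real.sqrt 3^3*ρ + (-1/18)*c^5*ρ + (-1/6)*c^5*Real.sqrt 3^2*ρ + (-1/18)*c^5*Real.sqrt 3^4*ρ + (1/18)*c^5*Real.sqrt 2^2*Real.sqrt 3^2*ρ + (-1/108)*c^5*Real.sqrt 2^2*Real.sqrt 3^4*ρ) * hpy +
    ((16/27)*r^3*ρ + (2/9)*Real.sqrt 3^2*r^3*ρ + (1/54)*Real.sqrt 3^4*r^3*ρ + (32/27)*s*Real.sqrt 3*ρ + (4/27)*s*Real.sqrt 3^3*ρ + (-1/27)*s*Real.sqrt 3^3*r^3 + (16/27)*s*Real.sqrt 2^2*Real.sqrt 3*ρ + (2/27)*s*Real.sqrt 2^2*Real.sqrt 3^3*ρ + (32/27)*c*ρ + (32/27)*c*r^3 + (4/9)*c*Real.sqrt 3^2*ρ + (-2/9)*c*Real.sqrt 3^2*r^2*ρ + (-1/9)*c*Real.sqrt 3^2*r^3 + (-1/36)*c*Real.sqrt 3^4*r^2*ρ + (16/27)*c*Real.sqrt 2^2*ρ + (16/27)*c*Real.sqrt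 2^2*r^3 + (2/9)*c*Real.sqrt 2^2*Real.sqrt 3^2*ρ + (4/9)*c*s*Real.sqrt 3*r^3*ρ + (2/27)*c*s*Real.sqrt 3^3*r^3*ρ + (2/9)*c^2*r^3*ρ + (-1/9)*c^2*Real.sqrt 3^2*r^3*ρ + (-1/27)*c^2*Real.sqrt 3^4*r^3*ρ + (4/9)*c^2*s*Real.sqrt 3*ρ + (-4/9)*c^2*s*Real.sqrt 3*r^2*ρ + (-1/9)*c^2*s*Real.sqrt 3*r^3 + (-4/27)*c^2*s*Real.sqrt 3^3*ρ + (-1/9)*c^2*s*Real.sqrt 3^3*r^2*ρ + (1/27)*c^2*s*Real.sqrt 3^3*r^3 + (2/9)*c^2*s*Real.sqrt 2^2*Real.sqrt 3*ρ + (-2/27)*c^2*s*Real.sqrt 2^2*Real.sqrt 3^3*ρ + (4/27)*c^3*ρ + (-2/9)*c^3*r^2*ρ + (-1/27)*c^3*r^3 + (-10/27)*c^3*Real.sqrt 3^2*ρ + (1/18)*c^3*Real.sqrt 3^2*r^2*ρ + (1/9)*c^3*Real.sqrt 3^2*r^3 + (1/108)*c^3*Real.sqrt 3^4*ρ + (1/18)*c^3*Real.sqrt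 3^4*r^2*ρ + (2/27)*c^3*Real.sqrt 2^2*ρ + (-2/9)*c^3*Real.sqrt 2^2*Real.sqrt 3^2*ρ + (2/27)*c^3*s*Real.sqrt 3*r^3*ρ + (-2/27)*c^3*s*Real.sqrt 3^3*r^3*ρ + (1/54)*c^4*r^3*ρ + (-1/9)*c^4*Real.sqrt 3^2*r^3*ρ + (1/54)*c^4*Real.sqrt 3^4*r^3*ρ + (4/27)*c^4*s*Real.sqrt 3*ρ + (-1/9)*c^4*s*Real.sqrt 3*r^2*ρ + (1/27)*c^4*s*Real.sqrt 3^3*ρ + (1/9)*c^4*s*Real.sqrt 3^3*r^2*ρ + (2/27)*c^5*ρ + (-1/36)*c^5*r^2*ρ + (-1/54)*c^5*Real.sqrt 3^2*ρ + (1/6)*c^5*Real.sqrt 3^2*r^2*ρ + (-1/54)*c^5*Real.sqrt 3^4*ρ + (-1/36)*c^5*Real.sqrt 3^4*r^2*ρ + (1/27)*c^6*s*Real.sqrt 3*ρ + (-1/27)*c^6*s*Real.sqrt 3^3*ρ + (1/108)*c^7*ρ + (-1/18)*c^7*Real.sqrt 3^2*ρ + (1/108)*c^7*Real.sqrt 3^4*ρ)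 * hu +
    ((8/27)*r^3*ρ + (1/27)*Real.sqrt 3^2*r^3*ρ + (8/27)*s*Real.sqrt 3*ρ + (-4/27)*s*Real.sqrt 3*r^2*ρ + (-2/9)*s*Real.sqrt 3*r^3 + (-1/54)*s*Real.sqrt 3^3*r^3 + (8/9)*c*ρ + (-8/9)*c*r^2*ρ + (-22/27)*c*r^3 + (-1/18)*c*Real.sqrt 3^2*r^2*ρ + (-5/18)*c*Real.sqrt 3^2*r^3 + (-1/54)*c*Real.sqrt 3^4*r^3 + (2/27)*c*s*Real.sqrt 3*r^3*ρ + (-7/27)*c^2*r^3*ρ + (-2/27)*c^2*Real.sqrt 3^2*r^3*ρ + (-8/27)*c^2*s*Real.sqrt 3*ρ + (1/9)*c^2*s*Real.sqrt 3*r^2*ρ + (7/18)*c^2*s*Real.sqrt 3*r^3 + (1/54)*c^2*s*Real.sqrt 3^3*r^3 + (-8/9)*c^3*ρ + (133/54)*c^3*r^2*ρ + (35/54)*c^3*r^3 + (1/54)*c^3*Real.sqrt 3^2*ρ + (5/18)*c^3*Real.sqrt 3^2*r^2*ρ + (7/18)*c^3*Real.sqrt 3^2*r^3 + (1/27)*c^3*Real.sqrt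 3^4*r^3 + (-2/27)*c^3*s*Real.sqrt 3*r^3*ρ + (-1/27)*c^4*r^3*ρ + (1/27)*c^4*Real.sqrt 3^2*r^3*ρ + (-1/27)*c^4*s*Real.sqrt 3*ρ + (10/27)*c^4*s*Real.sqrt 3*r^2*ρ + (4/27)*c^4*s*Real.sqrt 3*r^3 + (-13/18)*c^5*ρ + (-2/27)*c^5*r^2*ρ + (1/18)*c^5*r^3 + (-5/54)*c^5*Real.sqrt 3^2*ρ + (-2/9)*c^5*Real.sqrt 3^2*r^2*ρ + (-1/9)*c^5*Real.sqrt 3^2*r^3 + (-1/54)*c^5*Real.sqrt 3^4*r^3 + (-2/27)*c^6*s*Real.sqrt 3*ρ + (2/9)*c^7*ρ + (2/27)*c^7*Real.sqrt 3^2*ρ) * hv +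
    ((-44/27)*s*Real.sqrt 3*ρ + (-68/27)*c*ρ + (22/27)*c^2*s*Real.sqrt 3*ρ + (88/27)*c^3*ρ + (4/27)*c^4*s*Real.sqrt 3*ρ + (-20/27)*c^5*ρ) * hr2

lemma max6a (x0 x1 x2 x3 x4 x5 : ℝ) :
    max (max (max x1 x2) (max x0 x5)) (max x3 x4)
      = max (max (max x0 x1) (max x2 x3)) (max x4 x5) := by
  apply le_antisymm
  · exact max_le (max_le
      (max_le (le_max_of_le_left (le_max_of_le_left (le_max_right x0 x1)))
              (le_max_of_le_left (le_max_of_le_right (le_max_left x2 x3))))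
      (max_le (le_max_of_le_left (le_max_of_le_left (le_max_left x0 x1)))
              (le_max_of_le_right (le_max_right x4 x5))))
      (max_le (le_max_of_le_left (le_max_of_le_right (le_max_right x2 x3)))
              (le_max_of_le_right (le_max_left x4 x5)))
  · exact max_le (max_le
      (max_le (le_max_of_le_left (le_max_of_le_right (le_max_left x0 x5)))
              (le_max_of_le_left (le_max_of_le_left (le_max_left x1 x2))))
      (max_le (le_max_of_le_left (le_max_of_le_left (le_max_right x1 x2)))
              (le_max_of_le_right (le_max_left x3 x4))))
      (max_le (le_max_of_le_right (le_max_right x3 x4))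
              (le_max_of_le_left (le_max_of_le_right (le_max_right x0 x5))))

lemma max6b (x0 x1 x2 x3 x4 x5 : ℝ) :
    max (max (max x0 x2) (max x1 x4)) (max x3 x5)
      = max (max (max x0 x1) (max x2 x3)) (max x4 x5) := by
  apply le_antisymm
  · exact max_le (max_le
      (max_le (le_max_of_le_left (le_max_of_le_left (le_max_left x0 x1)))
              (le_max_of_le_left (le_max_of_le_right (le_max_left x2 x3))))
      (max_le (le_max_of_le_left (le_max_of_le_left (le_max_right x0 x1)))
              (le_max_of_le_right (le_max_left x4 x5))))
      (max_le (le_max_of_le_left (le_max_of_le_right (le_max_right x2 x3)))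
              (le_max_of_le_right (le_max_right x4 x5)))
  · exact max_le (max_le
      (max_le (le_max_of_le_left (le_max_of_le_left (le_max_left x0 x2)))
              (le_max_of_le_left (le_max_of_le_right (le_max_left x1 x4))))
      (max_le (le_max_of_le_left (le_max_of_le_left (le_max_right x0 x2)))
              (le_max_of_le_right (le_max_left x3 x5))))
      (max_le (le_max_of_le_left (le_max_of_le_right (le_max_right x1 x4)))
              (le_max_of_le_right (le_max_right x3 x5)))

lemma gTetra_negb (a b c : ℝ) : gTetra a (-b) c = gTetra a b c := by
  unfold gTetra
  rw [show (1/9) * (Real.sqrt 2 * a + Real.sqrt 6 * (-b) + 4 * c) ^ 2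
      = (1/9) * (Real.sqrt 2 * a - Real.sqrt 6 * b + 4 * c) ^ 2 from by ring,
    show (1/9) * (Real.sqrt 2 * a - Real.sqrt 6 * (-b) + 4 * c) ^ 2
      = (1/9) * (Real.sqrt 2 * a + Real.sqrt 6 * b + 4 * c) ^ 2 from by ring,
    show (2/3) * (3 * a ^ 2 + 2 * Real.sqrt 3 * a * (-b) + (-b) ^ 2)
      = (2/3) * (3 * a ^ 2 - 2 * Real.sqrt 3 * a * b + b ^ 2) from by ring,
    show (2/3) * (3 * a ^ 2 - 2 * Real.sqrt 3 * a * (-b) + (-b) ^ 2)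
      = (2/3) * (3 * a ^ 2 + 2 * Real.sqrt 3 * a * b + b ^ 2) from by ring,
    show (8/3) * (-b) ^ 2 = (8/3) * b ^ 2 from by ring]
  exact max6b _ _ _ _ _ _

lemma gTetra_rot (a b c : ℝ) :
    gTetra (-(a + Real.sqrt 3 * b)/2) ((Real.sqrt 3 * a - b)/2) c = gTetra a b c := by
  unfold gTetra
  rw [show (8/9) * ((-(a + Real.sqrt 3 * b)/2) ^ 2 - 2 * Real.sqrt 2 * (-(a + Real.sqrt 3 * b)/2) * c + 2 * c ^ 2)
      = (1/9) * (Real.sqrt 2 * a + Real.sqrt 6 * b + 4 * c) ^ 2 from by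
      linear_combination ((-8/9)*b*c + (-1/9)*b^2*Real.sqrt 6 + (-1/9)*b^2*Real.sqrt 2*Real.sqrt 3 + (-2/9)*a*b*Real.sqrt 2) * h6 + ((-1/9)*b^2*Real.sqrt 3^2 + (-2/9)*a*b*Real.sqrt 3 + (-1/9)*a^2) * hu,
    show (1/9) * (Real.sqrt 2 * (-(a + Real.sqrt 3 * b)/2) + Real.sqrt 6 * ((Real.sqrt 3 * a - b)/2) + 4 * c) ^ 2
      = (1/9) * (Real.sqrt 2 * a - Real.sqrt 6 * b + 4 * c) ^ 2 from by
      linear_combination ((4/9)*b*c + (-1/12)*b^2*Real.sqrt 6 + (-1/36)*b^2*Real.sqrt 2*Real.sqrt 3 + (4/9)*a*c*Real.sqrt 3 + (-1/18)*a*b*Real.sqrt 3*Real.sqrt 6 + (5/18)*a*b*Real.sqrt 2 + (-1/9)*a*b*Real.sqrt 2*Real.sqrt 3^2 + (1/36)*a^2*Real.sqrt 3^2*Real.sqrt 6 + (-1/18)*a^2*Real.sqrt 2*Real.sqrt 3 + (1/36)*a^2*Real.sqrt 2*Real.sqrt 3^3) * h6 + ((1/3)*a*b*Real.sqrt 3 +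 (-1/9)*a*b*Real.sqrt 3^3 + (-1/12)*a^2 + (-1/18)*a^2*Real.sqrt 3^2 + (1/36)*a^2*Real.sqrt 3^4) * hu + ((4/9)*a*c*Real.sqrt 2 + (-2/9)*a*b*Real.sqrt 3 + (1/18)*a^2 + (1/18)*a^2*Real.sqrt 3^2) * hv,
    show (1/9) * (Real.sqrt 2 * (-(a + Real.sqrt 3 * b)/2) - Real.sqrt 6 * ((Real.sqrt 3 * a - b)/2) + 4 * c) ^ 2
      = (8/9) * (a ^ 2 - 2 * Real.sqrt 2 * a * c + 2 * c ^ 2) from by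
      linear_combination ((4/9)*b*c + (1/36)*b^2*Real.sqrt 6 + (-1/36)*b^2*Real.sqrt 2*Real.sqrt 3 + (-4/9)*a*c*Real.sqrt 3 + (-1/18)*a*b*Real.sqrt 3*Real.sqrt 6 + (-1/18)*a*b*Real.sqrt 2 + (1/36)*a^2*Real.sqrt 3^2*Real.sqrt 6 + (1/18)*a^2*Real.sqrt 2*Real.sqrt 3 + (1/36)*a^2*Real.sqrt 2*Real.sqrt 3^3) * h6 + ((1/36)*a^2 + (1/18)*a^2*Real.sqrt 3^2 + (1/36)*a^2*Real.sqrt 3^4) * hu + ((-4/9)*a*c*Real.sqrt 2 + (5/18)*a^2 + (1/18)*a^2*Real.sqrt 3^2) * hv,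
    show (2/3) * (3 * (-(a + Real.sqrt 3 * b)/2) ^ 2 + 2 * Real.sqrt 3 * (-(a + Real.sqrt 3 * b)/2) * ((Real.sqrt 3 * a - b)/2) + ((Real.sqrt 3 * a - b)/2) ^ 2)
      = (8/3) * b ^ 2 from by
      linear_combination ((5/6)*b^2 + (-1/3)*a*b*Real.sqrt 3 + (-1/6)*a^2) * hv,
    show (2/3) * (3 * (-(a + Real.sqrt 3 * b)/2) ^ 2 - 2 * Real.sqrt 3 * (-(a + Real.sqrt 3 * b)/2) * ((Real.sqrt 3 * a - b)/2) + ((Real.sqrt 3 * a - b)/2) ^ 2)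
      = (2/3) * (3 * a ^ 2 + 2 * Real.sqrt 3 * a * b + b ^ 2) from by
      linear_combination ((1/6)*b^2 + (1/3)*a*b*Real.sqrt 3 + (1/2)*a^2) * hv,
    show (8/3) * ((Real.sqrt 3 * a - b)/2) ^ 2
      = (2/3) * (3 * a ^ 2 - 2 * Real.sqrt 3 * a * b + b ^ 2) from by
      linear_combination ((2/3)*a^2) * hv]
  exact max6a _ _ _ _ _ _

noncomputable def Ifun (θ : ℝ) : ℝ :=
  ∫ φ in (0:ℝ)..π, gTetra (Real.cos θ * Real.sin φ) (Real.sin θ * Real.sin φ) (Real.cos φ) * Real.sin φ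

lemma Ifun_cont : Continuous Ifun := by
  apply intervalIntegral.continuous_parametric_intervalIntegral_of_continuous'
    (f := fun θ φ => gTetra (Real.cos θ * Real.sin φ) (Real.sin θ * Real.sin φ) (Real.cos φ) * Real.sin φ)
  show Continuous fun p : ℝ × ℝ =>
    gTetra (Real.cos p.1 * Real.sin p.2) (Real.sin p.1 * Real.sin p.2) (Real.cos p.2) * Real.sin p.2
  unfold gTetra
  fun_prop

lemma Ifun_int (a b : ℝ) : IntervalIntegrable Ifun MeasureTheory.volume a b :=
  Ifun_cont.intervalIntegrable a b

lemma Ifun_per (θ : ℝ) : Ifun (θ + 2*π/3) = Ifun θ := by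
  unfold Ifun
  apply intervalIntegral.integral_congr
  intro x _
  dsimp only
  have hc : Real.cos (θ + 2*π/3) = -(Real.cos θ + Real.sqrt 3*Real.sin θ)/2 := by
    rw [Real.cos_add, show (2*π/3 : ℝ) = π - π/3 by ring, Real.cos_pi_sub, Real.sin_pi_sub,
      Real.cos_pi_div_three, Real.sin_pi_div_three]
    ring
  have hs : Real.sin (θ + 2*π/3) = (Real.sqrt 3*Real.cos θ - Real.sin θ)/2 := by
    rw [Real.sin_add, show (2*π/3 : ℝ) = π - π/3 by ring, Real.cos_pi_sub, Real.sin_pi_sub,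
      Real.cos_pi_div_three, Real.sin_pi_div_three]
    ring
  rw [hc, hs,
    show -(Real.cos θ + Real.sqrt 3*Real.sin θ)/2 * Real.sin x
      = -((Real.cos θ * Real.sin x) + Real.sqrt 3*(Real.sin θ * Real.sin x))/2 from by ring,
    show (Real.sqrt 3*Real.cos θ - Real.sin θ)/2 * Real.sin x
      = (Real.sqrt 3*(Real.cos θ * Real.sin x) - Real.sin θ * Real.sin x)/2 from by ring,
    gTetra_rot]

lemma Ifun_neg (θ : ℝ) : Ifun (-θ) = Ifun θ := by
  unfold Ifun
  apply intervalIntegral.integral_congr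
  intro x _
  dsimp only
  rw [Real.cos_neg, Real.sin_neg,
    show -Real.sin θ * Real.sin x = -(Real.sin θ * Real.sin x) from by ring, gTetra_negb]

lemma reduce6 : (∫ θ in (0:ℝ)..(2*π), Ifun θ) = 6 * ∫ θ in (0:ℝ)..(π/3), Ifun θ := by
  have A1 := intervalIntegral.integral_comp_add_right (a := (0:ℝ)) (b := 2*π/3) (f := Ifun) (2*π/3)
  rw [show (0:ℝ)+2*π/3 = 2*π/3 by ring, show (2*π/3:ℝ)+2*π/3 = 4*π/3 by ring] at A1
  have A1' : (∫ x in (2*π/3:ℝ)..(4*π/3), Ifun x) = ∫ x in (0:ℝ)..(2*π/3), Ifun x := by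
    rw [← A1]
    apply intervalIntegral.integral_congr
    intro x _
    dsimp only
    rw [Ifun_per]
  have A2 := intervalIntegral.integral_comp_add_right (a := (0:ℝ)) (b := 2*π/3) (f := Ifun) (4*π/3)
  rw [show (0:ℝ)+4*π/3 = 4*π/3 by ring, show (2*π/3:ℝ)+4*π/3 = 2*π by ring] at A2
  have A2' : (∫ x in (4*π/3:ℝ)..(2*π), Ifun x) = ∫ x in (0:ℝ)..(2*π/3), Ifun x := by
    rw [← A2]
    apply intervalIntegral.integral_congr
    intro x _
    dsimp only
    rw [show x + 4*π/3 = (x + 2*π/3) + 2*π/3 from by ring, Ifun_per, Ifun_per]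
  have S1 := intervalIntegral.integral_comp_sub_left (a := (0:ℝ)) (b := π/3) Ifun (2*π/3)
  rw [show (2*π/3:ℝ) - π/3 = π/3 by ring, show (2*π/3:ℝ) - 0 = 2*π/3 by ring] at S1
  have S1' : (∫ x in (π/3:ℝ)..(2*π/3), Ifun x) = ∫ x in (0:ℝ)..(π/3), Ifun x := by
    rw [← S1]
    apply intervalIntegral.integral_congr
    intro x _
    dsimp only
    rw [show 2*π/3 - x = -x + 2*π/3 from by ring, Ifun_per, Ifun_neg]
  have B1 := intervalIntegral.integral_add_adjacent_intervals
    (Ifun_int 0 (2*π/3)) (Ifun_int (2*π/3) (2*π))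
  have B2 := intervalIntegral.integral_add_adjacent_intervals
    (Ifun_int (2*π/3) (4*π/3)) (Ifun_int (4*π/3) (2*π))
  have B3 := intervalIntegral.integral_add_adjacent_intervals
    (Ifun_int 0 (π/3)) (Ifun_int (π/3) (2*π/3))
  linarith [A1', A2', S1', B1, B2, B3]

noncomputable def Ffun (θ : ℝ) : ℝ :=
  (16/27) * ((Real.sin θ - Real.sqrt 3/2*Real.cos θ) * Real.sqrt (Real.cos θ^2+2)
    + (Real.sqrt 3/2*((Real.cos θ+Real.sqrt 3*Real.sin θ)/2) - (Real.sqrt 3*Real.cos θ-Real.sin θ)/2)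
        * Real.sqrt (((Real.cos θ+Real.sqrt 3*Real.sin θ)/2)^2+2)
    + 3*θ + Real.sin θ*Real.cos θ/4 + Real.sqrt 3*Real.sin θ^2/4)

lemma outer_deriv (θ : ℝ) : HasDerivAt Ffun (Efun θ) θ := by
  have hcos := Real.hasDerivAt_cos θ
  have hsin := Real.hasDerivAt_sin θ
  have h1 : HasDerivAt (fun t : ℝ => Real.cos t^2+2) (2*Real.cos θ*(-Real.sin θ)) θ := by
    have h := (hcos.pow 2).add_const (2:ℝ)
    refine h.congr_deriv ?_
    norm_num
  have hr : HasDerivAt (fun t : ℝ => Real.sqrt (Real.cos t^2+2))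
      (2*Real.cos θ*(-Real.sin θ) / (2*Real.sqrt (Real.cos θ^2+2))) θ := h1.sqrt (by positivity)
  have hA : HasDerivAt (fun t : ℝ => Real.sin t - Real.sqrt 3/2*Real.cos t)
      (Real.cos θ - Real.sqrt 3/2*(-Real.sin θ)) θ := hsin.sub (hcos.const_mul _)
  have hm' : HasDerivAt (fun t : ℝ => (Real.cos t+Real.sqrt 3*Real.sin t)/2)
      ((-Real.sin θ+Real.sqrt 3*Real.cos θ)/2) θ := by
    have h := (hcos.add (hsin.const_mul (Real.sqrt 3))).div_const 2
    exact h
  have h2 : HasDerivAt (fun t : ℝ => ((Real.cos t+Real.sqrt 3*Real.sin t)/2)^2+2)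
      (2*((Real.cos θ+Real.sqrt 3*Real.sin θ)/2)*((-Real.sin θ+Real.sqrt 3*Real.cos θ)/2)) θ := by
    have h := (hm'.pow 2).add_const (2:ℝ)
    refine h.congr_deriv ?_
    norm_num
  have hρd : HasDerivAt (fun t : ℝ => Real.sqrt (((Real.cos t+Real.sqrt 3*Real.sin t)/2)^2+2))
      (2*((Real.cos θ+Real.sqrt 3*Real.sin θ)/2)*((-Real.sin θ+Real.sqrt 3*Real.cos θ)/2)
        / (2*Real.sqrt (((Real.cos θ+Real.sqrt 3*Real.sin θ)/2)^2+2))) θ := h2.sqrt (by positivity)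
  have hB : HasDerivAt (fun t : ℝ =>
      Real.sqrt 3/2*((Real.cos t+Real.sqrt 3*Real.sin t)/2) - (Real.sqrt 3*Real.cos t-Real.sin t)/2)
      (Real.sqrt 3/2*((-Real.sin θ+Real.sqrt 3*Real.cos θ)/2) - (Real.sqrt 3*(-Real.sin θ)-Real.cos θ)/2) θ :=
    (hm'.const_mul _).sub (((hcos.const_mul _).sub hsin).div_const 2)
  have hT3 : HasDerivAt (fun t : ℝ => 3*t) 3 θ := by
    simpa using (hasDerivAt_id θ).const_mul (3:ℝ)
  have hT5 : HasDerivAt (fun t : ℝ => Real.sin t^2) (2*Real.sin θ*Real.cos θ) θ := by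
    have h := hsin.pow 2
    refine h.congr_deriv ?_
    norm_num
  have big := (((((hA.mul hr).add (hB.mul hρd)).add hT3).add
    ((hsin.mul hcos).div_const 4)).add ((hT5.const_mul (Real.sqrt 3)).div_const 4)).const_mul ((16:ℝ)/27)
  unfold Ffun Efun
  refine big.congr_deriv ?_; symm
  have hpy : Real.sin θ^2 + Real.cos θ^2 = 1 := Real.sin_sq_add_cos_sq θ
  have hr2 : (Real.sqrt (Real.cos θ^2+2))^2 = Real.cos θ^2+2 := Real.sq_sqrt (by positivity)
  have hρ2 : (Real.sqrt (((Real.cos θ+Real.sqrt 3*Real.sin θ)/2)^2+2))^2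
      = ((Real.cos θ+Real.sqrt 3*Real.sin θ)/2)^2+2 := Real.sq_sqrt (by positivity)
  have hri : Real.sqrt (Real.cos θ^2+2) * (Real.sqrt (Real.cos θ^2+2))⁻¹ = 1 :=
    mul_inv_cancel₀ (by positivity)
  have hρi : Real.sqrt (((Real.cos θ+Real.sqrt 3*Real.sin θ)/2)^2+2)
      * (Real.sqrt (((Real.cos θ+Real.sqrt 3*Real.sin θ)/2)^2+2))⁻¹ = 1 :=
    mul_inv_cancel₀ (by positivity)
  apply mul_right_cancel₀ (show Real.sqrt (Real.cos θ^2+2)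
    * Real.sqrt (((Real.cos θ+Real.sqrt 3*Real.sin θ)/2)^2+2) ≠ 0 by positivity)
  linear_combination
        ((16/27)*Real.sin θ*Real.sqrt 3*Real.sqrt (((Real.cos θ+Real.sqrt 3*Real.sin θ)/2)^2+2) + (16/27)*Real.cos θ*Real.sqrt (((Real.cos θ+Real.sqrt 3*Real.sin θ)/2)^2+2) + (16/27)*Real.cos θ*Real.sin θ^2*Real.sqrt (((Real.cos θ+Real.sqrt 3*Real.sin θ)/2)^2+2) + (8/27)*Real.cos θ^2*Real.sin θ*Real.sqrt 3*Real.sqrt (((Real.cos θ+Real.sqrt 3*Real.sin θ)/2)^2+2) + (32/27)*Real.cos θ^3*Real.sqrt (((Real.cos θ+Real.sqrt 3*Real.sin θ)/2)^2+2)) * hri +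
    ((2/27)*Real.sin θ^3*Real.sqrt 3*Real.sqrt (Real.cos θ^2+2) + (1/9)*Real.sin θ^3*Real.sqrt 3^3*Real.sqrt (Real.cos θ^2+2) + (8/27)*Real.cos θ*Real.sqrt (Real.cos θ^2+2) + (8/27)*Real.cos θ*Real.sqrt 3^2*Real.sqrt (Real.cos θ^2+2) + (2/27)*Real.cos θ*Real.sin θ^2*Real.sqrt (Real.cos θ^2+2) + (2/9)*Real.cos θ*Real.sin θ^2*Real.sqrt 3^2*Real.sqrt (Real.cos θ^2+2) + (1/27)*Real.cos θ*Real.sin θ^2*Real.sqrt 3^4*Real.sqrt (Real.cos θ^2+2) + (7/27)*Real.cos θ^2*Real.sin θ*Real.sqrt 3*Real.sqrt (Real.cos θ^2+2) + (4/27)*Real.cos θ^2*Real.sin θ*Real.sqrt 3^3*Real.sqrt (Real.cos θ^2+2) + (4/27)*Real.cos θ^3*Real.sqrt (Real.cos θ^2+2) + (1/9)*Real.cos θ^3*Real.sqrt 3^2*Real.sqrt (Real.cos θ^2+2)) * hρi +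
    ((-4/27)*Real.sin θ*Real.sqrt 3*Real.sqrt (Real.cos θ^2+2) + (-8/27)*Real.cos θ*Real.sqrt (Real.cos θ^2+2) + (-4/27)*Real.cos θ*Real.sqrt 3^2*Real.sqrt (Real.cos θ^2+2)) * hρ2 +
    ((4/27)*Real.sqrt (Real.cos θ^2+2)*Real.sqrt (((Real.cos θ+Real.sqrt 3*Real.sin θ)/2)^2+2) + (2/27)*Real.sin θ*Real.sqrt 3*Real.sqrt (Real.cos θ^2+2) + (2/27)*Real.sin θ*Real.sqrt 3^3*Real.sqrt (Real.cos θ^2+2) + (16/27)*Real.cos θ*Real.sqrt (((Real.cos θ+Real.sqrt 3*Real.sin θ)/2)^2+2) + (2/27)*Real.cos θ*Real.sqrt (Real.cos θ^2+2) + (2/27)*Real.cos θ*Real.sqrt 3^2*Real.sqrt (Real.cos θ^2+2)) * hpy +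
    ((2/27)*Real.sin θ*Real.sqrt 3*Real.sqrt (Real.cos θ^2+2) + (2/27)*Real.cos θ*Real.sqrt (Real.cos θ^2+2)) * hv +
    ((-8/27)*Real.sin θ*Real.sqrt 3*Real.sqrt (((Real.cos θ+Real.sqrt 3*Real.sin θ)/2)^2+2) + (-16/27)*Real.cos θ*Real.sqrt (((Real.cos θ+Real.sqrt 3*Real.sin θ)/2)^2+2)) * hr2

lemma Efun_cont : Continuous Efun := by
  have cA : Continuous (fun θ : ℝ =>
      (Real.cos θ*(2*Real.cos θ^2+1) + Real.sqrt 3*Real.sin θ*(Real.cos θ^2+1))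
        / Real.sqrt (Real.cos θ^2+2)) :=
    Continuous.div (by fun_prop) (by fun_prop) (fun x => by positivity)
  have cB : Continuous (fun θ : ℝ =>
      (((Real.cos θ+Real.sqrt 3*Real.sin θ)/2)*(2*((Real.cos θ+Real.sqrt 3*Real.sin θ)/2)^2+1)
       + Real.sqrt 3*((Real.sqrt 3*Real.cos θ-Real.sin θ)/2)*(((Real.cos θ+Real.sqrt 3*Real.sin θ)/2)^2+1))
        / Real.sqrt (((Real.cos θ+Real.sqrt 3*Real.sin θ)/2)^2+2)) :=
    Continuous.div (by fun_prop) (by fun_prop) (fun x => by positivity)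
  unfold Efun
  exact continuous_const.mul (((cA.add cB).add continuous_const).add (by fun_prop))

lemma outer_integral : (∫ θ in (0:ℝ)..(π/3), Efun θ) = (16/27)*(π + 3 + Real.sqrt 3) := by
  rw [intervalIntegral.integral_eq_sub_of_hasDerivAt (f := Ffun) (fun x _ => outer_deriv x)
    (Efun_cont.intervalIntegrable 0 (π/3))]
  unfold Ffun
  rw [Real.cos_pi_div_three, Real.sin_pi_div_three, Real.cos_zero, Real.sin_zero]
  rw [show ((1/2+Real.sqrt 3*(Real.sqrt 3/2))/2 : ℝ) = 1 from by linear_combination (1/4:ℝ)*hv,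
    show ((1+Real.sqrt 3*0)/2 : ℝ) = 1/2 from by norm_num]
  rw [show ((1:ℝ)/2)^2+2 = (3/2)^2 from by norm_num,
    show ((1:ℝ))^2+2 = 3 from by norm_num,
    Real.sqrt_sq (by norm_num : (0:ℝ) ≤ 3/2)]
  linear_combination ((16/27 : ℝ) + (1/27)*Real.sqrt 3) * hv


/-- The mean square width of a regular tetrahedron with unit edge length is
`(1/3)(1 + (3+√3)/π)`. -/
theorem mean_square_width_regular_tetrahedron :
    (3/8) * (1 / (4 * π)) *
      ∫ θ in (0:ℝ)..(2 * π), ∫ φ in (0:ℝ)..π,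
        gTetra (Real.cos θ * Real.sin φ) (Real.sin θ * Real.sin φ) (Real.cos φ) * Real.sin φ
      = (1/3) * (1 + (3 + Real.sqrt 3) / π) := by
  have hJ : (∫ θ in (0:ℝ)..(π/3), Ifun θ) = (16/27)*(π + 3 + Real.sqrt 3) := by
    have hcong : (∫ θ in (0:ℝ)..(π/3), Ifun θ) = ∫ θ in (0:ℝ)..(π/3), Efun θ := by
      apply intervalIntegral.integral_congr
      intro x hx
      rw [Set.uIcc_of_le (by positivity)] at hx
      obtain ⟨h0, h1⟩ := hx
      have hπ6 : 0 ≤ Real.cos (x + π/6) := by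
        apply Real.cos_nonneg_of_mem_Icc
        constructor
        · have := Real.pi_pos; linarith
        · linarith
      rw [Real.cos_add, Real.cos_pi_div_six, Real.sin_pi_div_six] at hπ6
      have hsx : 0 ≤ Real.sin x := by
        apply Real.sin_nonneg_of_nonneg_of_le_pi h0
        have := Real.pi_pos; linarith
      have h3x : Real.sin x ≤ Real.sqrt 3 * Real.cos x := by linarith
      show Ifun x = Efun x
      exact inner_eval x hsx h3x
    rw [hcong, outer_integral]
  show (3/8) * (1 / (4 * π)) * (∫ θ in (0:ℝ)..(2*π), Ifun θ) = _
  rw [reduce6, hJ]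
  have hπ : π ≠ 0 := Real.pi_ne_zero
  field_simp
  ring
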